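/- The smallest enclosing circle of a finite set of at least two points in the Euclidean plane is unique: if two closed disks of minimal radius both contain the set, they are equal. -/
import Mathlib


/-- The smallest enclosing circle of a finite set of at least two points in the
Euclidean plane is unique: two closed disks of minimal radius containing the
set coincide. -/
theorem sec_unique (S : Set (EuclideanSpace ℝ (Fin 2))) (hfin : S.Finite)
    (h2 : 2 ≤ S.ncard)
    (c₁ c₂ : EuclideanSpace ℝ (Fin 2)) (r₁ r₂ : ℝ)
    (h₁ : S ⊆ Metric.closedBall c₁ r₁)
    (h₁min : ∀ (c : EuclideanSpace ℝ (Fin 2)) (r : ℝ), S ⊆ Metric.closedBall c r → r₁ ≤ r)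
    (h₂' : S ⊆ Metric.closedBall c₂ r₂)
    (h₂min : ∀ (c : EuclideanSpace ℝ (Fin 2)) (r : ℝ), S ⊆ Metric.closedBall c r → r₂ ≤ r) :
    Metric.closedBall c₁ r₁ = Metric.closedBall c₂ r₂ := by
  have hr : r₁ = r₂ := le_antisymm (h₁min c₂ r₂ h₂') (h₂min c₁ r₁ h₁)
  subst hr
  obtain ⟨x₀, hx₀⟩ : S.Nonempty := by
    rcases Set.eq_empty_or_nonempty S with h | h
    · simp [h] at h2
    · exact h
  have hr0 : 0 ≤ r₁ := le_trans dist_nonneg (h₁ hx₀)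
  set m : EuclideanSpace ℝ (Fin 2) := midpoint ℝ c₁ c₂ with hm
  set d : ℝ := dist c₁ c₂ with hd
  have key : ∀ y ∈ S, dist y m ^ 2 ≤ r₁ ^ 2 - d ^ 2 / 4 := by
    intro y hy
    have hy1 : dist y c₁ ≤ r₁ := h₁ hy
    have hy2 : dist y c₂ ≤ r₁ := h₂' hy
    have hpar := parallelogram_law_with_norm ℝ (y - c₁) (y - c₂)
    have e1 : (y - c₁) + (y - c₂) = (2 : ℝ) • (y - m) := by
      rw [hm, midpoint_eq_smul_add, invOf_eq_inv]
      module
    have e2 : (y - c₁) - (y - c₂) = c₂ - c₁ := by abel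
    rw [e1, e2, norm_smul] at hpar
    have hne : ‖(2:ℝ)‖ = 2 := by norm_num
    rw [hne] at hpar
    have hdy1 : ‖y - c₁‖ = dist y c₁ := (dist_eq_norm _ _).symm
    have hdy2 : ‖y - c₂‖ = dist y c₂ := (dist_eq_norm _ _).symm
    have hdd : ‖c₂ - c₁‖ = d := by rw [hd, dist_comm, dist_eq_norm]
    have hdm : ‖y - m‖ = dist y m := (dist_eq_norm _ _).symm
    rw [hdy1, hdy2, hdd, hdm] at hpar
    nlinarith [dist_nonneg (x := y) (y := c₁), dist_nonneg (x := y) (y := c₂),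
      dist_nonneg (x := y) (y := m), dist_nonneg (x := c₁) (y := c₂)]
  have hsub : S ⊆ Metric.closedBall m (Real.sqrt (r₁ ^ 2 - d ^ 2 / 4)) := by
    intro y hy
    have := key y hy
    have h0 : 0 ≤ dist y m := dist_nonneg
    have : dist y m ≤ Real.sqrt (r₁ ^ 2 - d ^ 2 / 4) := by
      have := Real.sqrt_le_sqrt (key y hy)
      rwa [Real.sqrt_sq h0] at this
    exact Metric.mem_closedBall.mpr this
  have hle : r₁ ≤ Real.sqrt (r₁ ^ 2 - d ^ 2 / 4) := h₁min _ _ hsub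
  have hsq : r₁ ^ 2 ≤ r₁ ^ 2 - d ^ 2 / 4 := by
    have hnn : 0 ≤ r₁ ^ 2 - d ^ 2 / 4 := le_trans (sq_nonneg _) (key x₀ hx₀)
    nlinarith [Real.sq_sqrt hnn, Real.sqrt_nonneg (r₁ ^ 2 - d ^ 2 / 4)]
  have hd0 : d = 0 := by
    have : d ^ 2 ≤ 0 := by linarith
    have := sq_nonneg d
    nlinarith
  have : c₁ = c₂ := dist_eq_zero.mp hd0
  rw [this]
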